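/- With notation as in the context, assume ℓ ≥ 2 and let η ∈ ℂⁿ satisfy rank D_η = 2. Let σ be the cyclic permutation of {1,…,ℓ} with σ(k) = k+1 for k < ℓ and σ(ℓ) = 1. Then there exist indices 1 ≤ i < j ≤ ℓ with η_i·η_{σ(j)} − η_j·η_{σ(i)} ≠ 0, and for every such pair (i,j) the map sending x ∈ F_η = {x ∈ ℂ^{n+1} : P(η,x) = 0 and Q(η,x) = 0} to the tuple of its n−1 coordinates other than x_i and x_j is a bijection from F_η onto ℂ^{n−1}. -/

import Mathlib

private lemma sum_diff_two {ℓ m : ℕ} (hm : ℓ ≤ m) (f : Fin ℓ → ℂ) (x x' : Fin m → ℂ)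
    (i j : Fin ℓ) (hij : i ≠ j)
    (h : ∀ k : Fin ℓ, k ≠ i → k ≠ j → x (Fin.castLE hm k) = x' (Fin.castLE hm k)) :
    (∑ k : Fin ℓ, f k * x (Fin.castLE hm k)) - ∑ k : Fin ℓ, f k * x' (Fin.castLE hm k) =
      f i * (x (Fin.castLE hm i) - x' (Fin.castLE hm i)) +
      f j * (x (Fin.castLE hm j) - x' (Fin.castLE hm j)) := by
  classical
  rw [← Finset.sum_sub_distrib]
  simp_rw [← mul_sub]
  have hp : (∑ k ∈ ({i, j} : Finset (Fin ℓ)), f k * (x (Fin.castLE hm k) - x' (Fin.castLE hm k)))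
      = f i * (x (Fin.castLE hm i) - x' (Fin.castLE hm i)) +
        f j * (x (Fin.castLE hm j) - x' (Fin.castLE hm j)) := Finset.sum_pair hij
  rw [← hp]
  refine (Finset.sum_subset (Finset.subset_univ _) ?_).symm
  intro k _ hk
  simp only [Finset.mem_insert, Finset.mem_singleton, not_or] at hk
  rw [h k hk.1 hk.2, sub_self, mul_zero]

private lemma solve_exists (a b a' b' pa pb : ℂ) (hd : a * b' - b * a' ≠ 0) :
    ∃ s t : ℂ, a * s + b * t = -pa ∧ a' * s + b' * t = -pb :=
  ⟨(b * pb - b' * pa) / (a * b' - b * a'), (a' * pa - a * pb) / (a * b' - b * a'),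
    by field_simp; ring, by
      rw [mul_div_assoc', mul_div_assoc', ← add_div, div_eq_iff hd]; ring⟩

private lemma solve_unique (a b a' b' u v : ℂ) (hd : a * b' - b * a' ≠ 0)
    (e1 : a * u + b * v = 0) (e2 : a' * u + b' * v = 0) : u = 0 ∧ v = 0 := by
  constructor
  · have h : (a * b' - b * a') * u = b' * (a * u + b * v) - b * (a' * u + b' * v) := by ring
    rw [e1, e2] at h
    simp only [mul_zero, sub_zero] at h
    rcases mul_eq_zero.mp h with h | h
    · exact absurd h hd
    · exact h
  · have h : (a * b' - b * a') * v = a * (a' * u + b' * v) - a' * (a * u + b * v) := by ring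
    rw [e1, e2] at h
    simp only [mul_zero, sub_zero] at h
    rcases mul_eq_zero.mp h with h | h
    · exact absurd h hd
    · exact h


noncomputable section

/-- `P(y,x) = y₁x₁ + ⋯ + y_ℓx_ℓ + x_{n+1}²` (coordinates indexed from `0`). -/
def Ppoly (n ℓ : ℕ) (hn : ℓ ≤ n) (y : Fin n → ℂ) (x : Fin (n + 1) → ℂ) : ℂ :=
  (∑ k : Fin ℓ, y (Fin.castLE hn k) * x (Fin.castLE (hn.trans n.le_succ) k)) +
    x (Fin.last n) ^ 2

/-- `Q(y,x) = y₂x₁ + y₃x₂ + ⋯ + y_ℓx_{ℓ−1} + y₁x_ℓ` (for `ℓ = 1`, `Q = y₁x₁`), written as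
`∑_{k=1}^{ℓ} y_{σ(k)} x_k` with `σ` the cyclic shift of `{1,…,ℓ}`. -/
def Qpoly (n ℓ : ℕ) (h1 : 1 ≤ ℓ) (hn : ℓ ≤ n) (y : Fin n → ℂ) (x : Fin (n + 1) → ℂ) : ℂ :=
  ∑ k : Fin ℓ, y (Fin.castLE hn ⟨((k : ℕ) + 1) % ℓ, Nat.mod_lt _ h1⟩) *
    x (Fin.castLE (hn.trans n.le_succ) k)

/-- The `2 × ℓ` matrix `D_y` with rows `(y₁,…,y_ℓ)` and `(y₂,…,y_ℓ,y₁)`. -/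
def Dmat (n ℓ : ℕ) (h1 : 1 ≤ ℓ) (hn : ℓ ≤ n) (y : Fin n → ℂ) : Matrix (Fin 2) (Fin ℓ) ℂ :=
  Matrix.of ![fun k => y (Fin.castLE hn k),
    fun k => y (Fin.castLE hn ⟨((k : ℕ) + 1) % ℓ, Nat.mod_lt _ h1⟩)]

/-- `L_c(x) = ∑_{k=1}^{ℓ} c^{ℓ+1−k}·x_k` (in `0`-based indexing, `∑_k c^{ℓ−k} x_k`). -/
def Lpoly (n ℓ : ℕ) (hn : ℓ ≤ n) (c : ℂ) (x : Fin (n + 1) → ℂ) : ℂ :=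
  ∑ k : Fin ℓ, c ^ (ℓ - (k : ℕ)) * x (Fin.castLE (hn.trans n.le_succ) k)

/-- The space `X = {P = 0, Q = 0} ⊆ ℂⁿ × ℂ^{n+1}` of Example 2.3. -/
def Xset (n ℓ : ℕ) (h1 : 1 ≤ ℓ) (hn : ℓ ≤ n) : Set ((Fin n → ℂ) × (Fin (n + 1) → ℂ)) :=
  {p | Ppoly n ℓ hn p.1 p.2 = 0 ∧ Qpoly n ℓ h1 hn p.1 p.2 = 0}

/-- The locus `A = {(y,x) ∈ X : rank D_y ≤ 1}`. -/
def Aset (n ℓ : ℕ) (h1 : 1 ≤ ℓ) (hn : ℓ ≤ n) : Set ((Fin n → ℂ) × (Fin (n + 1) → ℂ)) :=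
  {p ∈ Xset n ℓ h1 hn | (Dmat n ℓ h1 hn p.1).rank ≤ 1}

/-- In Example 2.3 with `ℓ ≥ 2`, if `rank D_η = 2` then some `2 × 2` minor
`η_i·η_{σ(j)} − η_j·η_{σ(i)}` (with `σ` the cyclic shift of `{1,…,ℓ}`, here `0`-based:
`σ(k) = (k+1) mod ℓ`) is nonzero, and for every such pair `i < j`, forgetting the
coordinates `x_i` and `x_j` is a bijection from the fibre
`F_η = {x ∈ ℂ^{n+1} : P(η,x) = 0, Q(η,x) = 0}` onto `ℂ^{n−1}` (the space of functions on
the remaining `n−1` coordinates). -/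
theorem fibre_bijection_rank_two (n ℓ : ℕ) (h1 : 1 ≤ ℓ) (h2 : 2 ≤ ℓ) (hn : ℓ ≤ n)
    (η : Fin n → ℂ) (hrank : (Dmat n ℓ h1 hn η).rank = 2) :
    (∃ i j : Fin ℓ, i < j ∧
      η (Fin.castLE hn i) * η (Fin.castLE hn ⟨((j : ℕ) + 1) % ℓ, Nat.mod_lt _ h1⟩) -
        η (Fin.castLE hn j) * η (Fin.castLE hn ⟨((i : ℕ) + 1) % ℓ, Nat.mod_lt _ h1⟩) ≠ 0) ∧
    ∀ i j : Fin ℓ, i < j →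
      η (Fin.castLE hn i) * η (Fin.castLE hn ⟨((j : ℕ) + 1) % ℓ, Nat.mod_lt _ h1⟩) -
        η (Fin.castLE hn j) * η (Fin.castLE hn ⟨((i : ℕ) + 1) % ℓ, Nat.mod_lt _ h1⟩) ≠ 0 →
      Nat.card {k : Fin (n + 1) // k ≠ Fin.castLE (hn.trans n.le_succ) i ∧
        k ≠ Fin.castLE (hn.trans n.le_succ) j} = n - 1 ∧
      Function.Bijective
        (fun (x : {x : Fin (n + 1) → ℂ //
              Ppoly n ℓ hn η x = 0 ∧ Qpoly n ℓ h1 hn η x = 0})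
          (k : {k : Fin (n + 1) // k ≠ Fin.castLE (hn.trans n.le_succ) i ∧
              k ≠ Fin.castLE (hn.trans n.le_succ) j}) => x.1 k.1) := by
  classical
  have hcast : Function.Injective (Fin.castLE (hn.trans n.le_succ)) := Fin.castLE_injective _
  have hlast : ∀ k : Fin ℓ, Fin.last n ≠ Fin.castLE (hn.trans n.le_succ) k := by
    intro k hk
    have h1 := congrArg Fin.val hk
    simp only [Fin.val_last, Fin.coe_castLE] at h1
    have : (k : ℕ) < ℓ := k.2
    omega
  constructor
  · -- existence of a nonzero minor
    by_contra hc
    push_neg at hc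
    have hall : ∀ i j : Fin ℓ,
        η (Fin.castLE hn i) * η (Fin.castLE hn ⟨((j : ℕ) + 1) % ℓ, Nat.mod_lt _ h1⟩) =
        η (Fin.castLE hn j) * η (Fin.castLE hn ⟨((i : ℕ) + 1) % ℓ, Nat.mod_lt _ h1⟩) := by
      intro i j
      rcases lt_trichotomy i j with h | h | h
      · exact sub_eq_zero.mp (hc i j h)
      · subst h; rfl
      · exact (sub_eq_zero.mp (hc j i h)).symm
    obtain ⟨c, hc2⟩ : ∃ c : ℂ, ∀ k : Fin ℓ,
        η (Fin.castLE hn ⟨((k : ℕ) + 1) % ℓ, Nat.mod_lt _ h1⟩) = c * η (Fin.castLE hn k) := by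
      by_cases h0 : ∃ i0 : Fin ℓ, η (Fin.castLE hn i0) ≠ 0
      · obtain ⟨i0, hi0⟩ := h0
        refine ⟨η (Fin.castLE hn ⟨((i0 : ℕ) + 1) % ℓ, Nat.mod_lt _ h1⟩) / η (Fin.castLE hn i0),
          fun k => ?_⟩
        rw [div_mul_eq_mul_div, eq_div_iff hi0, mul_comm (η (Fin.castLE hn _)) (η (Fin.castLE hn k))]
        rw [mul_comm]; exact hall i0 k
      · push_neg at h0
        exact ⟨0, fun k => by rw [h0, zero_mul]⟩
    have htop : LinearMap.range (Dmat n ℓ h1 hn η).mulVecLin = ⊤ := by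
      apply Submodule.eq_top_of_finrank_eq
      have hr : Module.finrank ℂ
          (LinearMap.range (Dmat n ℓ h1 hn η).mulVecLin) = 2 := hrank
      rw [hr]
      simp
    have hmem : (![0, -1] : Fin 2 → ℂ) ∈ LinearMap.range (Dmat n ℓ h1 hn η).mulVecLin := by
      rw [htop]; trivial
    obtain ⟨v, hv⟩ := hmem
    rw [Matrix.mulVecLin_apply] at hv
    have h0 : ∑ k : Fin ℓ, η (Fin.castLE hn k) * v k = 0 := by
      have := congrFun hv 0
      simpa [Dmat, Matrix.mulVec, dotProduct] using this
    have hone : ∑ k : Fin ℓ,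
        η (Fin.castLE hn ⟨((k : ℕ) + 1) % ℓ, Nat.mod_lt _ h1⟩) * v k = -1 := by
      have := congrFun hv 1
      simpa [Dmat, Matrix.mulVec, dotProduct] using this
    rw [show (∑ k : Fin ℓ,
        η (Fin.castLE hn ⟨((k : ℕ) + 1) % ℓ, Nat.mod_lt _ h1⟩) * v k)
        = c * ∑ k : Fin ℓ, η (Fin.castLE hn k) * v k by
      rw [Finset.mul_sum]; exact Finset.sum_congr rfl fun k _ => by rw [hc2 k]; ring] at hone
    rw [h0, mul_zero] at hone
    exact absurd hone.symm (by norm_num)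
  · -- the bijection statement
    intro i j hij hd
    have hijne : i ≠ j := hij.ne
    have hij' : Fin.castLE (hn.trans n.le_succ) i ≠ Fin.castLE (hn.trans n.le_succ) j :=
      fun h => hijne (hcast h)
    constructor
    · -- cardinality
      rw [Nat.card_eq_fintype_card, Fintype.card_subtype]
      have : (Finset.univ.filter fun k : Fin (n + 1) =>
          k ≠ Fin.castLE (hn.trans n.le_succ) i ∧ k ≠ Fin.castLE (hn.trans n.le_succ) j)
          = Finset.univ \ {Fin.castLE (hn.trans n.le_succ) i, Fin.castLE (hn.trans n.le_succ) j} := by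
        ext k; simp [and_comm]
      rw [this, Finset.card_sdiff_of_subset (Finset.subset_univ _), Finset.card_pair hij']
      simp only [Finset.card_univ, Fintype.card_fin]
      omega
    · -- the bijection
      have Pdiff : ∀ x x' : Fin (n + 1) → ℂ,
          (∀ k : Fin (n + 1), k ≠ Fin.castLE (hn.trans n.le_succ) i →
            k ≠ Fin.castLE (hn.trans n.le_succ) j → x k = x' k) →
          Ppoly n ℓ hn η x - Ppoly n ℓ hn η x' =
            η (Fin.castLE hn i) * (x (Fin.castLE (hn.trans n.le_succ) i) -
              x' (Fin.castLE (hn.trans n.le_succ) i)) +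
            η (Fin.castLE hn j) * (x (Fin.castLE (hn.trans n.le_succ) j) -
              x' (Fin.castLE (hn.trans n.le_succ) j)) := by
        intro x x' h
        have e := sum_diff_two (hn.trans n.le_succ) (fun k => η (Fin.castLE hn k)) x x' i j hijne
          (fun k hk1 hk2 => h _ (fun hh => hk1 (hcast hh)) (fun hh => hk2 (hcast hh)))
        have hl : x (Fin.last n) = x' (Fin.last n) := h _ (hlast i) (hlast j)
        show (_ + x (Fin.last n) ^ 2) - (_ + x' (Fin.last n) ^ 2) = _
        rw [hl, add_sub_add_right_eq_sub]
        exact e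
      have Qdiff : ∀ x x' : Fin (n + 1) → ℂ,
          (∀ k : Fin (n + 1), k ≠ Fin.castLE (hn.trans n.le_succ) i →
            k ≠ Fin.castLE (hn.trans n.le_succ) j → x k = x' k) →
          Qpoly n ℓ h1 hn η x - Qpoly n ℓ h1 hn η x' =
            η (Fin.castLE hn ⟨((i : ℕ) + 1) % ℓ, Nat.mod_lt _ h1⟩) *
              (x (Fin.castLE (hn.trans n.le_succ) i) - x' (Fin.castLE (hn.trans n.le_succ) i)) +
            η (Fin.castLE hn ⟨((j : ℕ) + 1) % ℓ, Nat.mod_lt _ h1⟩) *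
              (x (Fin.castLE (hn.trans n.le_succ) j) - x' (Fin.castLE (hn.trans n.le_succ) j)) := by
        intro x x' h
        exact sum_diff_two (hn.trans n.le_succ)
          (fun k => η (Fin.castLE hn ⟨((k : ℕ) + 1) % ℓ, Nat.mod_lt _ h1⟩)) x x' i j hijne
          (fun k hk1 hk2 => h _ (fun hh => hk1 (hcast hh)) (fun hh => hk2 (hcast hh)))
      constructor
      · -- injective
        rintro ⟨x, hxP, hxQ⟩ ⟨x', hxP', hxQ'⟩ hxx
        have hh : ∀ k : Fin (n + 1), k ≠ Fin.castLE (hn.trans n.le_succ) i →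
            k ≠ Fin.castLE (hn.trans n.le_succ) j → x k = x' k :=
          fun k hk1 hk2 => congrFun hxx ⟨k, hk1, hk2⟩
        have eP : η (Fin.castLE hn i) * (x (Fin.castLE (hn.trans n.le_succ) i) -
              x' (Fin.castLE (hn.trans n.le_succ) i)) +
            η (Fin.castLE hn j) * (x (Fin.castLE (hn.trans n.le_succ) j) -
              x' (Fin.castLE (hn.trans n.le_succ) j)) = 0 := by
          rw [← Pdiff x x' hh, hxP, hxP', sub_zero]
        have eQ : η (Fin.castLE hn ⟨((i : ℕ) + 1) % ℓ, Nat.mod_lt _ h1⟩) *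
              (x (Fin.castLE (hn.trans n.le_succ) i) - x' (Fin.castLE (hn.trans n.le_succ) i)) +
            η (Fin.castLE hn ⟨((j : ℕ) + 1) % ℓ, Nat.mod_lt _ h1⟩) *
              (x (Fin.castLE (hn.trans n.le_succ) j) - x' (Fin.castLE (hn.trans n.le_succ) j)) = 0 := by
          rw [← Qdiff x x' hh, hxQ, hxQ', sub_zero]
        obtain ⟨hu, hv⟩ := solve_unique _ _ _ _ _ _ hd eP eQ
        refine Subtype.ext (funext fun k => ?_)
        by_cases hki : k = Fin.castLE (hn.trans n.le_succ) i
        · subst hki; exact sub_eq_zero.mp hu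
        · by_cases hkj : k = Fin.castLE (hn.trans n.le_succ) j
          · subst hkj; exact sub_eq_zero.mp hv
          · exact hh k hki hkj
      · -- surjective
        intro z
        set x0 : Fin (n + 1) → ℂ := fun k =>
          if h : k ≠ Fin.castLE (hn.trans n.le_succ) i ∧ k ≠ Fin.castLE (hn.trans n.le_succ) j
          then z ⟨k, h⟩ else 0 with hx0
        obtain ⟨s, t, hst1, hst2⟩ := solve_exists _ _ _ _
          (Ppoly n ℓ hn η x0) (Qpoly n ℓ h1 hn η x0) hd
        set x : Fin (n + 1) → ℂ := Function.update
          (Function.update x0 (Fin.castLE (hn.trans n.le_succ) i) s)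
          (Fin.castLE (hn.trans n.le_succ) j) t with hx
        have hxi : x (Fin.castLE (hn.trans n.le_succ) i) = s := by
          rw [hx, Function.update_of_ne hij', Function.update_self]
        have hxj : x (Fin.castLE (hn.trans n.le_succ) j) = t := by
          rw [hx, Function.update_self]
        have hother : ∀ k : Fin (n + 1), k ≠ Fin.castLE (hn.trans n.le_succ) i →
            k ≠ Fin.castLE (hn.trans n.le_succ) j → x k = x0 k := by
          intro k hk1 hk2
          rw [hx, Function.update_of_ne hk2, Function.update_of_ne hk1]
        have hx0i : x0 (Fin.castLE (hn.trans n.le_succ) i) = 0 := dif_neg (fun h => h.1 rfl)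
        have hx0j : x0 (Fin.castLE (hn.trans n.le_succ) j) = 0 := dif_neg (fun h => h.2 rfl)
        have hP : Ppoly n ℓ hn η x = 0 := by
          have e := Pdiff x x0 hother
          rw [hxi, hxj, hx0i, hx0j, sub_zero, sub_zero, hst1, sub_eq_iff_eq_add] at e
          rw [e]; ring
        have hQ : Qpoly n ℓ h1 hn η x = 0 := by
          have e := Qdiff x x0 hother
          rw [hxi, hxj, hx0i, hx0j, sub_zero, sub_zero, hst2, sub_eq_iff_eq_add] at e
          rw [e]; ring
        refine ⟨⟨x, hP, hQ⟩, ?_⟩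
        funext k
        obtain ⟨k, hk1, hk2⟩ := k
        show x k = z ⟨k, hk1, hk2⟩
        rw [hother k hk1 hk2]
        simp only [hx0]
        exact dif_pos ⟨hk1, hk2⟩
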